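/- arXiv:0804.1810 — 3 statements merged into one kernel-verified Lean document; each statement's English description precedes it below -/
import Mathlib

section
/- Let l > 0, |b| ≤ l, and let α : [0,l] × ℝ → ℝ be continuous and bounded. For y in the set X of 1-Lipschitz functions on [0,l] with y(0) = 0, y(l) = b, define 𝒢(y) = ∫₀^l α(x, y(x))·γ(y'(x)) dx where γ(w) = 1 + √(1-w²) and y' denotes the a.e. derivative of y. For each m ≥ 1 define 𝒢_m(y) = Σ_{i=1}^m (l/m)·[sup over x ∈ [(i-1)l/m, il/m] of α(x, y(x))]·γ((m/l)·(y(il/m) - y((i-1)l/m))). If α ≥ 0, then 𝒢(y) ≤ 𝒢_m(y) for every y ∈ X and every m. -/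
open MeasureTheory Filter Set Topology

lemma mono_deriv_nonneg {f : ℝ → ℝ} (hf : Monotone f) (x : ℝ) : 0 ≤ deriv f x := by
  by_cases hd : DifferentiableAt ℝ f x
  · have h := hasDerivAt_iff_tendsto_slope.1 hd.hasDerivAt
    have h' : Tendsto (slope f x) (𝓝[>] x) (𝓝 (deriv f x)) :=
      h.mono_left (nhdsWithin_mono x fun z hz => ne_of_gt hz)
    refine ge_of_tendsto h' ?_
    filter_upwards [self_mem_nhdsWithin] with z hz
    rw [mem_Ioi] at hz
    rw [slope_def_field]
    exact div_nonneg (sub_nonneg.2 (hf hz.le)) (sub_nonneg.2 hz.le)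
  · simp [deriv_zero_of_not_differentiableAt hd]

lemma mono_ftc_le {f : ℝ → ℝ} (hf : Monotone f) (hc : Continuous f) {a b : ℝ} (hab : a ≤ b) :
    ∫ x in a..b, deriv f x ≤ f b - f a := by
  have hfm : Measurable (deriv f) := measurable_deriv f
  -- the difference quotients
  set F : ℕ → ℝ → ℝ := fun n x => ((n : ℝ) + 1) * (f (x + 1 / ((n : ℝ) + 1)) - f x) with hF
  have hFnonneg : ∀ n x, 0 ≤ F n x := by
    intro n x
    have h1 : (0:ℝ) < (n:ℝ) + 1 := by positivity
    have h2 : (0:ℝ) < 1 / ((n:ℝ)+1) := by positivity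
    exact mul_nonneg h1.le (sub_nonneg.2 (hf (by linarith)))
  have hFmeas : ∀ n, Measurable (fun x => ENNReal.ofReal (F n x)) := by
    intro n
    exact (ENNReal.measurable_ofReal.comp
      ((measurable_const.mul ((hc.measurable.comp (measurable_id.add_const _)).sub hc.measurable))))
  -- a.e. convergence
  have hae : ∀ᵐ x, Tendsto (fun n => F n x) atTop (𝓝 (deriv f x)) := by
    filter_upwards [hf.ae_differentiableAt] with x hx
    have h := hasDerivAt_iff_tendsto_slope.1 hx.hasDerivAt
    have hu : Tendsto (fun n : ℕ => x + 1 / ((n : ℝ) + 1)) atTop (𝓝[≠] x) := by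
      apply tendsto_nhdsWithin_of_tendsto_nhds_of_eventually_within
      · have := tendsto_one_div_add_atTop_nhds_zero_nat (𝕜 := ℝ)
        have h2 : Tendsto (fun n : ℕ => x + 1 / ((n : ℝ) + 1)) atTop (𝓝 (x + 0)) :=
          tendsto_const_nhds.add (by exact_mod_cast this)
        simpa using h2
      · filter_upwards with n
        have : (0:ℝ) < 1 / ((n : ℝ) + 1) := by positivity
        simp only [mem_compl_iff, mem_singleton_iff]
        intro hcon
        nlinarith [hcon]
    have := h.comp hu
    refine this.congr ?_
    intro n
    have h1 : (0:ℝ) < 1 / ((n : ℝ) + 1) := by positivity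
    simp only [Function.comp, slope_def_field, F]
    rw [div_eq_iff (by linarith : x + 1 / ((n:ℝ)+1) - x ≠ 0)]
    ring_nf
    field_simp
    ring
  -- integral bound for each difference quotient
  have hbound : ∀ n : ℕ, ∫ x in a..b, F n x ≤ f (b + 1/((n:ℝ)+1)) - f a := by
    intro n
    set h : ℝ := 1 / ((n : ℝ) + 1) with hh
    have hhpos : 0 < h := by positivity
    have hint : ∀ u v : ℝ, IntervalIntegrable f volume u v := fun u v =>
      hc.intervalIntegrable u v
    have hint' : IntervalIntegrable (fun x => f (x + h)) volume a b :=
      (hc.comp (continuous_id.add continuous_const)).intervalIntegrable a b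
    have e0 : ∫ x in a..b, F n x
        = ((n:ℝ)+1) * ((∫ x in a..b, f (x + h)) - ∫ x in a..b, f x) := by
      rw [← intervalIntegral.integral_sub hint' (hint a b),
        ← intervalIntegral.integral_const_mul]
    have e1 : (∫ x in a..b, f (x + h)) = ∫ x in (a+h)..(b+h), f x :=
      intervalIntegral.integral_comp_add_right f h
    have e2 : (∫ x in a..(a+h), f x) + ∫ x in (a+h)..(b+h), f x = ∫ x in a..(b+h), f x :=
      intervalIntegral.integral_add_adjacent_intervals (hint _ _) (hint _ _)
    have e3 : (∫ x in a..b, f x) + ∫ x in b..(b+h), f x = ∫ x in a..(b+h), f x :=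
      intervalIntegral.integral_add_adjacent_intervals (hint _ _) (hint _ _)
    have hub : ∫ x in b..(b+h), f x ≤ h * f (b+h) := by
      have := intervalIntegral.integral_mono_on (by linarith : b ≤ b + h) (hint _ _)
        (intervalIntegrable_const) (fun x hx => hf hx.2)
      simpa [smul_eq_mul] using this
    have hlb : h * f a ≤ ∫ x in a..(a+h), f x := by
      have := intervalIntegral.integral_mono_on (by linarith : a ≤ a + h)
        (intervalIntegrable_const) (hint _ _) (fun x hx => hf hx.1)
      simpa [smul_eq_mul] using this
    have hmul : ((n:ℝ)+1) * h = 1 := by rw [hh]; field_simp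
    calc ∫ x in a..b, F n x = ((n:ℝ)+1) * ((∫ x in b..(b+h), f x) - ∫ x in a..(a+h), f x) := by
          rw [e0, e1]
          have : (∫ x in (a+h)..(b+h), f x) - ∫ x in a..b, f x
              = (∫ x in b..(b+h), f x) - ∫ x in a..(a+h), f x := by linarith
          rw [this]
      _ ≤ ((n:ℝ)+1) * (h * f (b+h) - h * f a) := by
          apply mul_le_mul_of_nonneg_left (by linarith) (by positivity)
      _ = f (b + h) - f a := by rw [mul_sub, ← mul_assoc, ← mul_assoc, hmul]; ring
  -- Fatou
  have key : ∫⁻ x in Ioc a b, ENNReal.ofReal (deriv f x) ≤ ENNReal.ofReal (f b - f a) := by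
    have step1 : ∫⁻ x in Ioc a b, ENNReal.ofReal (deriv f x)
        = ∫⁻ x in Ioc a b, liminf (fun n => ENNReal.ofReal (F n x)) atTop := by
      apply lintegral_congr_ae
      refine (ae_restrict_of_ae ?_)
      filter_upwards [hae] with x hx
      exact (((ENNReal.continuous_ofReal.tendsto _).comp hx).liminf_eq).symm
    have step2 : ∫⁻ x in Ioc a b, liminf (fun n => ENNReal.ofReal (F n x)) atTop
        ≤ liminf (fun n => ∫⁻ x in Ioc a b, ENNReal.ofReal (F n x)) atTop :=
      lintegral_liminf_le hFmeas
    have step3 : ∀ n : ℕ, ∫⁻ x in Ioc a b, ENNReal.ofReal (F n x)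
        ≤ ENNReal.ofReal (f (b + 1/((n:ℝ)+1)) - f a) := by
      intro n
      have hcont : Continuous (F n) := by
        apply continuous_const.mul
        exact (hc.comp (continuous_id.add continuous_const)).sub hc
      rw [← ofReal_integral_eq_lintegral_ofReal hcont.integrableOn_Ioc
        (ae_of_all _ fun x => hFnonneg n x)]
      apply ENNReal.ofReal_le_ofReal
      rw [← intervalIntegral.integral_of_le hab]
      exact hbound n
    have step4 : liminf (fun n : ℕ => ∫⁻ x in Ioc a b, ENNReal.ofReal (F n x)) atTop
        ≤ liminf (fun n : ℕ => ENNReal.ofReal (f (b + 1/((n:ℝ)+1)) - f a)) atTop :=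
      liminf_le_liminf (Eventually.of_forall step3)
    have step5 : liminf (fun n : ℕ => ENNReal.ofReal (f (b + 1/((n:ℝ)+1)) - f a)) atTop
        = ENNReal.ofReal (f b - f a) := by
      apply Tendsto.liminf_eq
      apply (ENNReal.continuous_ofReal.tendsto _).comp
      have h2 : Tendsto (fun n : ℕ => b + 1 / ((n : ℝ) + 1)) atTop (𝓝 b) := by
        have := tendsto_one_div_add_atTop_nhds_zero_nat (𝕜 := ℝ)
        simpa using (tendsto_const_nhds.add this : Tendsto (fun n : ℕ => b + 1/((n:ℝ)+1)) atTop (𝓝 (b + 0)))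
      exact ((hc.tendsto b).comp h2).sub tendsto_const_nhds
    calc _ = _ := step1
      _ ≤ _ := step2
      _ ≤ _ := step4
      _ ≤ _ := step5.le
  -- conclude
  have hde : ∫ x in a..b, deriv f x = (∫⁻ x in Ioc a b, ENNReal.ofReal (deriv f x)).toReal := by
    rw [intervalIntegral.integral_of_le hab,
      integral_eq_lintegral_of_nonneg_ae (ae_of_all _ fun x => mono_deriv_nonneg hf x)
        hfm.aestronglyMeasurable]
  rw [hde]
  calc (∫⁻ x in Ioc a b, ENNReal.ofReal (deriv f x)).toReal
      ≤ (ENNReal.ofReal (f b - f a)).toReal := ENNReal.toReal_mono ENNReal.ofReal_ne_top key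
    _ = f b - f a := ENNReal.toReal_ofReal (sub_nonneg.2 (hf hab))

lemma lip_deriv_abs_le {g : ℝ → ℝ} (hg : LipschitzWith 1 g) (x : ℝ) : |deriv g x| ≤ 1 := by
  have := norm_deriv_le_of_lipschitz (𝕜 := ℝ) hg (x₀ := x)
  simpa [Real.norm_eq_abs] using this

lemma lip_deriv_intervalIntegrable {g : ℝ → ℝ} (hg : LipschitzWith 1 g) (a b : ℝ) :
    IntervalIntegrable (deriv g) volume a b := by
  rw [intervalIntegrable_iff]
  haveI : IsFiniteMeasure (volume.restrict (Set.uIoc a b)) := by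
    constructor
    rw [Measure.restrict_apply_univ]
    exact measure_Ioc_lt_top
  apply (integrable_const (1:ℝ)).mono' (measurable_deriv g).aestronglyMeasurable
  filter_upwards with x
  simpa [Real.norm_eq_abs] using lip_deriv_abs_le hg x

lemma lip_ftc {g : ℝ → ℝ} (hg : LipschitzWith 1 g) {a b : ℝ} (hab : a ≤ b) :
    ∫ x in a..b, deriv g x = g b - g a := by
  have hc : Continuous g := hg.continuous
  have hae : ∀ᵐ x, DifferentiableAt ℝ g x := hg.ae_differentiableAt_real
  have hint : IntervalIntegrable (deriv g) volume a b := lip_deriv_intervalIntegrable hg a b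
  have hlip : ∀ u v : ℝ, u ≤ v → |g v - g u| ≤ v - u := by
    intro u v huv
    have := hg.dist_le_mul v u
    rw [Real.dist_eq, Real.dist_eq] at this
    calc |g v - g u| ≤ 1 * |v - u| := this
      _ = v - u := by rw [one_mul, abs_of_nonneg (by linarith)]
  have hmono₁ : Monotone (fun x => x + g x) := by
    intro u v huv
    have := hlip u v huv
    have := abs_le.1 this
    simp only
    linarith [this.1]
  have hmono₂ : Monotone (fun x => x - g x) := by
    intro u v huv
    have := hlip u v huv
    have := abs_le.1 this
    simp only
    linarith [this.2]
  have h₁ : ∫ x in a..b, deriv (fun x => x + g x) x ≤ (b + g b) - (a + g a) :=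
    mono_ftc_le hmono₁ (continuous_id.add hc) hab
  have h₂ : ∫ x in a..b, deriv (fun x => x - g x) x ≤ (b - g b) - (a - g a) :=
    mono_ftc_le hmono₂ (continuous_id.sub hc) hab
  have e₁ : ∫ x in a..b, deriv (fun x => x + g x) x = ∫ x in a..b, (1 + deriv g x) := by
    apply intervalIntegral.integral_congr_ae
    have : ∀ᵐ x : ℝ, x ∈ Set.uIoc a b → deriv (fun x => x + g x) x = 1 + deriv g x := by
      filter_upwards [hae] with x hx _
      exact ((hasDerivAt_id x).add hx.hasDerivAt).deriv
    exact this
  have e₂ : ∫ x in a..b, deriv (fun x => x - g x) x = ∫ x in a..b, (1 - deriv g x) := by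
    apply intervalIntegral.integral_congr_ae
    have : ∀ᵐ x : ℝ, x ∈ Set.uIoc a b → deriv (fun x => x - g x) x = 1 - deriv g x := by
      filter_upwards [hae] with x hx _
      exact ((hasDerivAt_id x).sub hx.hasDerivAt).deriv
    exact this
  have s₁ : ∫ x in a..b, (1 + deriv g x) = (b - a) + ∫ x in a..b, deriv g x := by
    rw [intervalIntegral.integral_add intervalIntegrable_const hint]
    simp
  have s₂ : ∫ x in a..b, (1 - deriv g x) = (b - a) - ∫ x in a..b, deriv g x := by
    rw [intervalIntegral.integral_sub intervalIntegrable_const hint]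
    simp
  rw [e₁, s₁] at h₁
  rw [e₂, s₂] at h₂
  linarith


lemma bddae_intervalIntegrable {f : ℝ → ℝ} {a b C : ℝ}
    (hm : AEStronglyMeasurable f (volume.restrict (Set.uIoc a b)))
    (hbd : ∀ᵐ x ∂(volume.restrict (Set.uIoc a b)), ‖f x‖ ≤ C) :
    IntervalIntegrable f volume a b := by
  rw [intervalIntegrable_iff]
  haveI : IsFiniteMeasure (volume.restrict (Set.uIoc a b)) := by
    constructor
    rw [Measure.restrict_apply_univ]
    exact measure_Ioc_lt_top
  exact (integrable_const C).mono' hm hbd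

lemma key_interval {g : ℝ → ℝ} (hg : LipschitzWith 1 g) {p q : ℝ} (hpq : p < q)
    {A : ℝ → ℝ} (hAm : AEStronglyMeasurable A (volume.restrict (Set.Ioc p q)))
    {S : ℝ} (hS0 : 0 ≤ S) (hAS : ∀ x ∈ Set.Icc p q, A x ≤ S)
    (hA0 : ∀ x ∈ Set.Icc p q, 0 ≤ A x) :
    ∫ x in p..q, A x * (1 + Real.sqrt (1 - (deriv g x)^2))
      ≤ (q - p) * S * (1 + Real.sqrt (1 - ((g q - g p)/(q - p))^2)) := by
  have huIoc : Set.uIoc p q = Set.Ioc p q := Set.uIoc_of_le hpq.le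
  set c : ℝ := (g q - g p)/(q - p) with hcdef
  have hqp : (0:ℝ) < q - p := by linarith
  have hcabs : |c| ≤ 1 := by
    rw [hcdef, abs_div, abs_of_pos hqp, div_le_one hqp]
    have := hg.dist_le_mul q p
    rw [Real.dist_eq, Real.dist_eq] at this
    calc |g q - g p| ≤ 1 * |q - p| := this
      _ = q - p := by rw [one_mul, abs_of_pos hqp]
  have hc1 := (abs_le.1 hcabs).1
  have hc2 := (abs_le.1 hcabs).2
  set s : ℝ := Real.sqrt (1 - c^2) with hsdef
  have hs0 : 0 ≤ s := Real.sqrt_nonneg _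
  have hssq : s^2 = 1 - c^2 := Real.sq_sqrt (by nlinarith)
  set φ : ℝ → ℝ := fun x => Real.sqrt (1 - (deriv g x)^2) with hφdef
  have hw : ∀ x, |deriv g x| ≤ 1 := lip_deriv_abs_le hg
  have hφ0 : ∀ x, 0 ≤ φ x := fun x => Real.sqrt_nonneg _
  have hφsq : ∀ x, φ x ^ 2 = 1 - (deriv g x)^2 := fun x =>
    Real.sq_sqrt (by nlinarith [abs_le.1 (hw x)])
  have hφ1 : ∀ x, φ x ≤ 1 := by
    intro x
    nlinarith [hφsq x, hφ0 x, abs_le.1 (hw x)]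
  have hφmeas : Measurable φ :=
    Real.continuous_sqrt.measurable.comp (measurable_const.sub ((measurable_deriv g).pow_const 2))
  have hφint : IntervalIntegrable φ volume p q := by
    apply bddae_intervalIntegrable hφmeas.aestronglyMeasurable.restrict (C := 1)
    filter_upwards with x
    rw [Real.norm_eq_abs, abs_of_nonneg (hφ0 x)]
    exact hφ1 x
  have hdint : IntervalIntegrable (deriv g) volume p q := lip_deriv_intervalIntegrable hg p q
  have hmean : ∫ x in p..q, deriv g x = c * (q - p) := by
    rw [lip_ftc hg hpq.le, hcdef]
    field_simp
  -- pointwise Cauchy-Schwarz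
  have hpt : ∀ x, s * φ x ≤ 1 - c * deriv g x := by
    intro x
    have h1 := hφsq x
    have h2 := abs_le.1 (hw x)
    have h3 : 0 ≤ 1 - c * deriv g x := by nlinarith
    nlinarith [mul_nonneg hs0 (hφ0 x), sq_nonneg (c - deriv g x),
      sq_nonneg (s * φ x - (1 - c * deriv g x))]
  -- Jensen step
  have hJ : ∫ x in p..q, φ x ≤ (q - p) * s := by
    have hsint : s * ∫ x in p..q, φ x ≤ (q - p) * (1 - c^2) := by
      have hle : ∫ x in p..q, s * φ x ≤ ∫ x in p..q, (1 - c * deriv g x) := by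
        apply intervalIntegral.integral_mono_on hpq.le (hφint.const_mul s)
          (intervalIntegrable_const.sub (hdint.const_mul c))
        exact fun x _ => hpt x
      rw [intervalIntegral.integral_const_mul] at hle
      rw [intervalIntegral.integral_sub intervalIntegrable_const (hdint.const_mul c),
        intervalIntegral.integral_const_mul, hmean, intervalIntegral.integral_const,
        smul_eq_mul, mul_one] at hle
      calc s * ∫ x in p..q, φ x ≤ (q - p) - c * (c * (q - p)) := hle
        _ = (q - p) * (1 - c^2) := by ring
    rcases lt_or_eq_of_le hs0 with hs | hs
    · have : s * ∫ x in p..q, φ x ≤ s * ((q - p) * s) := by nlinarith [hssq]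
      exact (mul_le_mul_iff_right₀ hs).1 this
    · -- s = 0, so c^2 = 1 and deriv g = ±1 a.e., so φ = 0 a.e.
      have hcsq : c^2 = 1 := by nlinarith [hssq]
      have hzero : ∫ x in p..q, (1 - c * deriv g x) = 0 := by
        rw [intervalIntegral.integral_sub intervalIntegrable_const (hdint.const_mul c),
          intervalIntegral.integral_const_mul, hmean, intervalIntegral.integral_const,
          smul_eq_mul, mul_one]
        nlinarith
      have hnn : 0 ≤ᵐ[volume.restrict (Set.Ioc p q)] fun x => 1 - c * deriv g x := by
        filter_upwards with x
        have h2 := abs_le.1 (hw x)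
        simp only [Pi.zero_apply]
        nlinarith
      have hii : Integrable (fun x => 1 - c * deriv g x) (volume.restrict (Set.Ioc p q)) := by
        have h0 : IntervalIntegrable (fun x => 1 - c * deriv g x) volume p q :=
          intervalIntegrable_const.sub (hdint.const_mul c)
        rw [intervalIntegrable_iff, huIoc] at h0
        exact h0
      rw [intervalIntegral.integral_of_le hpq.le] at hzero
      have haez : (fun x => 1 - c * deriv g x) =ᵐ[volume.restrict (Set.Ioc p q)] 0 :=
        (integral_eq_zero_iff_of_nonneg_ae hnn hii).1 hzero
      have hφz : φ =ᵐ[volume.restrict (Set.Ioc p q)] 0 := by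
        filter_upwards [haez] with x hx
        simp only [Pi.zero_apply] at hx ⊢
        have hder : (deriv g x)^2 = 1 := by nlinarith
        rw [hφdef]
        simp [hder]
      rw [intervalIntegral.integral_of_le hpq.le, integral_congr_ae hφz]
      simp
      positivity
  -- assemble
  have hAint : IntervalIntegrable (fun x => A x * (1 + φ x)) volume p q := by
    apply bddae_intervalIntegrable (C := S * 2)
    · rw [huIoc]
      exact hAm.mul ((measurable_const.add hφmeas).aestronglyMeasurable.restrict)
    · rw [huIoc]
      filter_upwards [ae_restrict_mem measurableSet_Ioc] with x hx
      have hx' : x ∈ Set.Icc p q := Set.Ioc_subset_Icc_self hx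
      rw [Real.norm_eq_abs, abs_of_nonneg (mul_nonneg (hA0 x hx') (by linarith [hφ0 x]))]
      have := hφ1 x
      have := hφ0 x
      nlinarith [hAS x hx', hA0 x hx']
  have hSint : IntervalIntegrable (fun x => S * (1 + φ x)) volume p q :=
    (intervalIntegrable_const.add hφint).const_mul S
  calc ∫ x in p..q, A x * (1 + φ x) ≤ ∫ x in p..q, S * (1 + φ x) := by
        apply intervalIntegral.integral_mono_on hpq.le hAint hSint
        intro x hx
        exact mul_le_mul_of_nonneg_right (hAS x hx) (by linarith [hφ0 x])
    _ = S * ((q - p) + ∫ x in p..q, φ x) := by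
        rw [intervalIntegral.integral_const_mul,
          intervalIntegral.integral_add intervalIntegrable_const hφint,
          intervalIntegral.integral_const, smul_eq_mul, mul_one]
    _ ≤ S * ((q - p) + (q - p) * s) := by nlinarith
    _ = (q - p) * S * (1 + s) := by ring

/-- The Jensen/Riemann-sum bound 𝒢(y) ≤ 𝒢_m(y): for nonnegative continuous bounded α and
1-Lipschitz y on [0,l] with y(0)=0, y(l)=b, the functional
𝒢(y) = ∫₀^l α(x,y(x))·γ(y'(x)) dx is bounded above by the Riemann sum 𝒢_m(y), where
γ(w) = 1 + √(1-w²). -/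
theorem G_le_Gm (l b : ℝ) (hl : 0 < l) (hb : |b| ≤ l)
    (α : ℝ × ℝ → ℝ) (hαc : Continuous α) (hαb : ∃ M, ∀ p, α p ≤ M) (hα0 : ∀ p, 0 ≤ α p)
    (y : ℝ → ℝ) (hy : LipschitzOnWith 1 y (Set.Icc 0 l)) (hy0 : y 0 = 0) (hyl : y l = b)
    (m : ℕ) (hm : 1 ≤ m) :
    (∫ x in (0 : ℝ)..l, α (x, y x) * (1 + Real.sqrt (1 - (deriv y x) ^ 2)))
      ≤ ∑ i ∈ Finset.range m,
          (l / m) * sSup ((fun x => α (x, y x)) '' Set.Icc ((i : ℝ) * l / m) (((i : ℝ) + 1) * l / m))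
            * (1 + Real.sqrt (1 - ((m / l) * (y (((i : ℝ) + 1) * l / m) - y ((i : ℝ) * l / m))) ^ 2)) := by
  obtain ⟨M, hM⟩ := hαb
  have hM0 : 0 ≤ M := (hα0 (0, 0)).trans (hM (0, 0))
  obtain ⟨g, hg, hgy⟩ := hy.extend_real
  have hm0 : (0:ℝ) < m := by exact_mod_cast Nat.pos_of_ne_zero (by omega)
  set xp : ℕ → ℝ := fun i => (i:ℝ) * l / m with hxp
  have hgap : ∀ i : ℕ, xp (i+1) - xp i = l / m := by
    intro i; simp only [hxp]; push_cast; field_simp; ring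
  have hlm : (0:ℝ) < l / m := div_pos hl hm0
  have hstep : ∀ i : ℕ, xp i < xp (i+1) := by
    intro i; have := hgap i; linarith
  have hmem : ∀ i : ℕ, i ≤ m → xp i ∈ Set.Icc 0 l := by
    intro i hi
    simp only [hxp, Set.mem_Icc]
    constructor
    · positivity
    · rw [div_le_iff₀ hm0]
      have : (i:ℝ) ≤ m := by exact_mod_cast hi
      nlinarith
  have hyc : ContinuousOn y (Set.Icc 0 l) := hy.continuousOn
  have hAc : ContinuousOn (fun x => α (x, y x)) (Set.Icc 0 l) :=
    hαc.comp_continuousOn (continuousOn_id.prodMk hyc)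
  have hAmIcc : AEStronglyMeasurable (fun x => α (x, y x)) (volume.restrict (Set.Icc 0 l)) :=
    hAc.aestronglyMeasurable measurableSet_Icc
  have hsub : ∀ i : ℕ, i < m → Set.Ioc (xp i) (xp (i+1)) ⊆ Set.Icc 0 l := by
    intro i hi x hx
    exact ⟨(hmem i hi.le).1.trans hx.1.le, hx.2.trans (hmem (i+1) hi).2⟩
  have hAm : ∀ i : ℕ, i < m →
      AEStronglyMeasurable (fun x => α (x, y x)) (volume.restrict (Set.Ioc (xp i) (xp (i+1)))) := by
    intro i hi
    exact hAmIcc.mono_measure (Measure.restrict_mono (hsub i hi) le_rfl)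
  have hψb : ∀ (h : ℝ → ℝ) (x : ℝ), 0 ≤ 1 + Real.sqrt (1 - (deriv h x)^2) ∧
      1 + Real.sqrt (1 - (deriv h x)^2) ≤ 2 := by
    intro h x
    constructor
    · positivity
    · have h1 : Real.sqrt (1 - (deriv h x)^2) ≤ 1 := by
        calc Real.sqrt (1 - (deriv h x)^2) ≤ Real.sqrt 1 :=
              Real.sqrt_le_sqrt (by nlinarith [sq_nonneg (deriv h x)])
          _ = 1 := Real.sqrt_one
      linarith
  have hψm : ∀ h : ℝ → ℝ, Measurable (fun x => 1 + Real.sqrt (1 - (deriv h x)^2)) := by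
    intro h
    exact measurable_const.add (Real.continuous_sqrt.measurable.comp
      (measurable_const.sub ((measurable_deriv h).pow_const 2)))
  have hfint : ∀ i < m, IntervalIntegrable
      (fun x => α (x, y x) * (1 + Real.sqrt (1 - (deriv y x)^2))) volume (xp i) (xp (i+1)) := by
    intro i hi
    have huIoc : Set.uIoc (xp i) (xp (i+1)) = Set.Ioc (xp i) (xp (i+1)) :=
      Set.uIoc_of_le (hstep i).le
    apply bddae_intervalIntegrable (C := M * 2)
    · rw [huIoc]
      exact (hAm i hi).mul ((hψm y).aestronglyMeasurable.restrict)
    · rw [huIoc]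
      filter_upwards [ae_restrict_mem measurableSet_Ioc] with x hx
      have hx' : x ∈ Set.Icc 0 l := hsub i hi hx
      obtain ⟨hψ0, hψ2⟩ := hψb y x
      rw [Real.norm_eq_abs, abs_of_nonneg (mul_nonneg (hα0 _) hψ0)]
      have := hα0 (x, y x)
      nlinarith [hM (x, y x)]
  -- split the integral
  have hx0 : xp 0 = 0 := by simp [hxp]
  have hxm : xp m = l := by simp only [hxp]; field_simp
  have hsplit : (∫ x in (0:ℝ)..l, α (x, y x) * (1 + Real.sqrt (1 - (deriv y x) ^ 2)))
      = ∑ i ∈ Finset.range m, ∫ x in xp i..xp (i+1),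
          α (x, y x) * (1 + Real.sqrt (1 - (deriv y x) ^ 2)) := by
    have := intervalIntegral.sum_integral_adjacent_intervals (μ := volume) (a := xp) (n := m)
      (fun k hk => hfint k hk)
    rw [hx0, hxm] at this
    exact this.symm
  rw [hsplit]
  apply Finset.sum_le_sum
  intro i hi
  rw [Finset.mem_range] at hi
  set p : ℝ := (i:ℝ) * l / m with hpdef
  set q : ℝ := ((i:ℝ) + 1) * l / m with hqdef
  have hxpi : xp i = p := rfl
  have hxpi1 : xp (i+1) = q := by simp only [hxp, hqdef]; push_cast; ring
  have hpq : p < q := by rw [← hxpi, ← hxpi1]; exact hstep i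
  have hpmem : p ∈ Set.Icc 0 l := hxpi ▸ hmem i hi.le
  have hqmem : q ∈ Set.Icc 0 l := hxpi1 ▸ hmem (i+1) hi
  have hqp : q - p = l / m := by rw [← hxpi, ← hxpi1]; exact hgap i
  rw [hxpi1]
  -- replace deriv y by deriv g
  have hne : ∀ᵐ x : ℝ, x ≠ l := by
    rw [ae_iff]
    have : {x : ℝ | ¬ x ≠ l} = {l} := by ext x; simp
    rw [this]
    exact measure_singleton l
  have hcongr : (∫ x in p..q, α (x, y x) * (1 + Real.sqrt (1 - (deriv y x) ^ 2)))
      = ∫ x in p..q, α (x, y x) * (1 + Real.sqrt (1 - (deriv g x) ^ 2)) := by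
    apply intervalIntegral.integral_congr_ae
    filter_upwards [hne] with x hxne hxm'
    rw [Set.uIoc_of_le hpq.le] at hxm'
    have hx0' : 0 < x := lt_of_le_of_lt hpmem.1 hxm'.1
    have hxl : x < l := lt_of_le_of_ne (hxm'.2.trans hqmem.2) hxne
    have hdeq : deriv y x = deriv g x := by
      apply Filter.EventuallyEq.deriv_eq
      apply Filter.eventuallyEq_of_mem (Ioo_mem_nhds hx0' hxl)
      exact fun z hz => hgy (Set.Ioo_subset_Icc_self hz)
    rw [hdeq]
  rw [hcongr]
  -- apply key_interval
  set S : ℝ := sSup ((fun x => α (x, y x)) '' Set.Icc p q) with hSdef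
  have hbdd : BddAbove ((fun x => α (x, y x)) '' Set.Icc p q) := by
    refine ⟨M, ?_⟩
    rintro _ ⟨x, hx, rfl⟩
    exact hM _
  have hAS : ∀ x ∈ Set.Icc p q, α (x, y x) ≤ S := fun x hx => le_csSup hbdd ⟨x, hx, rfl⟩
  have hS0 : 0 ≤ S := (hα0 (p, y p)).trans (hAS p ⟨le_refl p, hpq.le⟩)
  have hA0 : ∀ x ∈ Set.Icc p q, 0 ≤ α (x, y x) := fun x _ => hα0 _
  have hAm' := hAm i hi
  rw [hxpi, hxpi1] at hAm'
  have hkey := key_interval hg hpq hAm' hS0 hAS hA0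
  calc (∫ x in p..q, α (x, y x) * (1 + Real.sqrt (1 - (deriv g x) ^ 2)))
      ≤ (q - p) * S * (1 + Real.sqrt (1 - ((g q - g p)/(q - p))^2)) := hkey
    _ = (l / m) * S * (1 + Real.sqrt (1 - ((m / l) * (y q - y p)) ^ 2)) := by
        rw [hqp, ← hgy hpmem, ← hgy hqmem]
        have hdiv : (y q - y p) / (l / m) = (m / l) * (y q - y p) := by
          rw [div_div_eq_mul_div]; ring
        rw [hdiv]
end

section
/- Let α : ℝ → ℝ be continuous, bounded, nonnegative. For l > 0 define 𝒢*[l] = sup over 1-Lipschitz functions y : [0,l] → ℝ with y(0) = y(l) = 0 of ∫₀^l α(y(x))·(1 + √(1-y'(x)²)) dx. Then l ↦ 𝒢*[l] is a convex function of l on (0,∞). -/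
open MeasureTheory intervalIntegral Set

noncomputable def Fv (α y : ℝ → ℝ) (x : ℝ) : ℝ :=
  α (y x) * (1 + Real.sqrt (1 - (deriv y x) ^ 2))

def Adm (α : ℝ → ℝ) (l : ℝ) : Set ℝ :=
  {r : ℝ | ∃ y : ℝ → ℝ, LipschitzOnWith 1 y (Set.Icc 0 l) ∧ y 0 = 0 ∧ y l = 0 ∧
      r = ∫ x in (0 : ℝ)..l, Fv α y x}

section basic
variable {α y : ℝ → ℝ}

lemma Fv_nonneg (hα0 : ∀ t, 0 ≤ α t) (y : ℝ → ℝ) (x : ℝ) : 0 ≤ Fv α y x := by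
  have : (0:ℝ) ≤ 1 + Real.sqrt (1 - (deriv y x) ^ 2) := by positivity
  exact mul_nonneg (hα0 _) this

lemma Fv_le (hα0 : ∀ t, 0 ≤ α t) (y : ℝ → ℝ) (x : ℝ) : Fv α y x ≤ 2 * α (y x) := by
  have h1 : Real.sqrt (1 - (deriv y x) ^ 2) ≤ 1 := by
    have := Real.sqrt_le_sqrt (show 1 - (deriv y x) ^ 2 ≤ 1 by nlinarith [sq_nonneg (deriv y x)])
    rwa [Real.sqrt_one] at this
  have h0 : (0:ℝ) ≤ Real.sqrt (1 - (deriv y x) ^ 2) := Real.sqrt_nonneg _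
  unfold Fv
  nlinarith [hα0 (y x)]

/-- integrability of the functional integrand -/
lemma Fv_intervalIntegrable (hαc : Continuous α) (hα0 : ∀ t, 0 ≤ α t)
    {M : ℝ} (hM : ∀ t, α t ≤ M) {u v : ℝ} (huv : u ≤ v)
    (hy : LipschitzOnWith 1 y (Set.Icc u v)) :
    IntervalIntegrable (Fv α y) volume u v := by
  rw [intervalIntegrable_iff_integrableOn_Ioc_of_le huv]
  have hyc : ContinuousOn y (Set.Icc u v) := hy.continuousOn
  have hmeas : AEStronglyMeasurable (Fv α y) (volume.restrict (Set.Ioc u v)) := by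
    have h1 : AEStronglyMeasurable (fun x => α (y x)) (volume.restrict (Set.Ioc u v)) := by
      exact ContinuousOn.aestronglyMeasurable (μ := volume)
        (hαc.comp_continuousOn (hyc.mono Set.Ioc_subset_Icc_self)) measurableSet_Ioc
    have h2 : Measurable (fun x => 1 + Real.sqrt (1 - (deriv y x) ^ 2)) := by
      have := measurable_deriv y
      fun_prop
    exact h1.mul h2.aestronglyMeasurable.restrict
  have hbound : ∀ᵐ x ∂(volume.restrict (Set.Ioc u v)), ‖Fv α y x‖ ≤ 2 * M := by
    filter_upwards with x
    rw [Real.norm_eq_abs, abs_of_nonneg (Fv_nonneg hα0 y x)]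
    calc Fv α y x ≤ 2 * α (y x) := Fv_le hα0 y x
    _ ≤ 2 * M := by linarith [hM (y x)]
  exact Integrable.mono' (integrableOn_const measure_Ioc_lt_top.ne) hmeas hbound

end basic
section splice
variable {f g : ℝ → ℝ} {u p v : ℝ}

/-- gluing two Lipschitz functions at a point -/
lemma lipschitz_splice (hu : u ≤ p) (hv : p ≤ v)
    (hf : LipschitzOnWith 1 f (Set.Icc u p)) (hg : LipschitzOnWith 1 g (Set.Icc p v))
    (hfg : f p = g p) :
    LipschitzOnWith 1 (fun x => if x ≤ p then f x else g x) (Set.Icc u v) := by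
  rw [lipschitzOnWith_iff_dist_le_mul]
  rw [lipschitzOnWith_iff_dist_le_mul] at hf hg
  intro x hx y hy
  simp only [NNReal.coe_one, one_mul] at *
  wlog hxy : y ≤ x generalizing x y
  · rw [dist_comm, dist_comm x y]; exact this y hy x hx (le_of_not_ge hxy)
  rcases le_or_gt x p with h1 | h1
  · have h2 : y ≤ p := le_trans hxy h1
    simp only [if_pos h1, if_pos h2]
    exact hf _ (Set.mem_Icc.2 ⟨hx.1, h1⟩) _ (Set.mem_Icc.2 ⟨hy.1, h2⟩)
  · rcases le_or_gt y p with h2 | h2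
    · simp only [if_neg (not_le.2 h1), if_pos h2]
      have d1 : dist (g x) (g p) ≤ dist x p := hg _ (Set.mem_Icc.2 ⟨le_of_lt h1, hx.2⟩) _ (Set.mem_Icc.2 ⟨le_refl p, hv⟩)
      have d2 : dist (f p) (f y) ≤ dist p y := hf _ (Set.mem_Icc.2 ⟨hu, le_refl p⟩) _ (Set.mem_Icc.2 ⟨hy.1, h2⟩)
      calc dist (g x) (f y) ≤ dist (g x) (g p) + dist (f p) (f y) := by
            rw [← hfg]; exact dist_triangle _ _ _
      _ ≤ dist x p + dist p y := add_le_add d1 d2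
      _ = dist x y := by
            rw [Real.dist_eq, Real.dist_eq, Real.dist_eq,
              abs_of_nonneg (by linarith : (0:ℝ) ≤ x - p),
              abs_of_nonneg (by linarith : (0:ℝ) ≤ p - y),
              abs_of_nonneg (by linarith : (0:ℝ) ≤ x - y)]
            ring
    · simp only [if_neg (not_le.2 h1), if_neg (not_le.2 h2)]
      exact hg _ (Set.mem_Icc.2 ⟨le_of_lt h1, hx.2⟩) _ (Set.mem_Icc.2 ⟨le_of_lt h2, hy.2⟩)

lemma lipschitz_shift {y : ℝ → ℝ} {a b : ℝ} (hy : LipschitzOnWith 1 y (Set.Icc a b)) (δ : ℝ) :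
    LipschitzOnWith 1 (fun x => y (x - δ)) (Set.Icc (a + δ) (b + δ)) := by
  rw [lipschitzOnWith_iff_dist_le_mul] at hy ⊢
  intro x hx z hz
  rw [Set.mem_Icc] at hx hz
  have := hy (x - δ) (Set.mem_Icc.2 ⟨by linarith [hx.1], by linarith [hx.2]⟩)
    (z - δ) (Set.mem_Icc.2 ⟨by linarith [hz.1], by linarith [hz.2]⟩)
  simp only [Real.dist_eq, sub_sub_sub_cancel_right] at this ⊢
  exact this

lemma lipschitz_const_onWith (c : ℝ) (s : Set ℝ) : LipschitzOnWith 1 (fun _ => c) s := by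
  rw [lipschitzOnWith_iff_dist_le_mul]
  intro x _ y _
  simp only [dist_self]
  positivity

/-- the integrand of the splice agrees with the pieces away from the gluing point -/
lemma Fv_splice_left (α : ℝ → ℝ) {x : ℝ} (hx : x < p) :
    Fv α (fun t => if t ≤ p then f t else g t) x = Fv α f x := by
  have hev : (fun t => if t ≤ p then f t else g t) =ᶠ[nhds x] f := by
    filter_upwards [Iio_mem_nhds hx] with t ht
    simp [le_of_lt (Set.mem_Iio.1 ht)]
  unfold Fv
  rw [hev.deriv_eq,
    show ((fun t => if t ≤ p then f t else g t) x) = f x by simp [le_of_lt hx]]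

lemma Fv_splice_right (α : ℝ → ℝ) {x : ℝ} (hx : p < x) :
    Fv α (fun t => if t ≤ p then f t else g t) x = Fv α g x := by
  have hev : (fun t => if t ≤ p then f t else g t) =ᶠ[nhds x] g := by
    filter_upwards [Ioi_mem_nhds hx] with t ht
    simp [not_le.2 (Set.mem_Ioi.1 ht)]
  unfold Fv
  rw [hev.deriv_eq,
    show ((fun t => if t ≤ p then f t else g t) x) = g x by simp [not_le.2 hx]]

/-- splitting the integral of the splice -/
lemma Fv_splice_integral (α : ℝ → ℝ) (hu : u ≤ p) (hv : p ≤ v)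
    (hif : IntervalIntegrable (Fv α f) volume u p)
    (hig : IntervalIntegrable (Fv α g) volume p v) :
    IntervalIntegrable (Fv α (fun t => if t ≤ p then f t else g t)) volume u v ∧
    (∫ x in u..v, Fv α (fun t => if t ≤ p then f t else g t) x)
      = (∫ x in u..p, Fv α f x) + ∫ x in p..v, Fv α g x := by
  set h : ℝ → ℝ := fun t => if t ≤ p then f t else g t with hh
  have hael : ∀ᵐ x ∂volume, x ∈ Set.uIoc u p → Fv α h x = Fv α f x := by
    filter_upwards [compl_mem_ae_iff.2 (measure_singleton p)] with x hx hmem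
    rw [Set.uIoc_of_le hu] at hmem
    have : x < p := lt_of_le_of_ne hmem.2 (by simpa using hx)
    exact Fv_splice_left α this
  have haer : ∀ᵐ x ∂volume, x ∈ Set.uIoc p v → Fv α h x = Fv α g x := by
    filter_upwards with x hmem
    rw [Set.uIoc_of_le hv] at hmem
    exact Fv_splice_right α hmem.1
  have hil : IntervalIntegrable (Fv α h) volume u p := by
    exact IntervalIntegrable.congr_ae hif
      (Filter.EventuallyEq.symm ((ae_restrict_iff' measurableSet_uIoc).2 hael))
  have hir : IntervalIntegrable (Fv α h) volume p v := by
    exact IntervalIntegrable.congr_ae hig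
      (Filter.EventuallyEq.symm ((ae_restrict_iff' measurableSet_uIoc).2 haer))
  refine ⟨hil.trans hir, ?_⟩
  rw [← intervalIntegral.integral_add_adjacent_intervals hil hir,
    intervalIntegral.integral_congr_ae hael, intervalIntegral.integral_congr_ae haer]

end splice
lemma Fv_const (α : ℝ → ℝ) (c : ℝ) (x : ℝ) : Fv α (fun _ => c) x = 2 * α c := by
  unfold Fv
  simp only [deriv_const']
  rw [show (1:ℝ) - 0 ^ 2 = 1 by ring, Real.sqrt_one]
  ring

lemma Fv_shift (α y : ℝ → ℝ) (δ x : ℝ) : Fv α (fun t => y (t - δ)) x = Fv α y (x - δ) := by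
  unfold Fv
  rw [deriv_comp_sub_const]

/-- The insertion construction: extending a competitor by a constant plateau of length δ. -/
lemma insertion {α : ℝ → ℝ} (hαc : Continuous α) (hα0 : ∀ t, 0 ≤ α t)
    {M : ℝ} (hM : ∀ t, α t ≤ M) {l δ : ℝ} (hδ : 0 ≤ δ) {y : ℝ → ℝ}
    (hy : LipschitzOnWith 1 y (Set.Icc 0 l)) (hy0 : y 0 = 0) (hyl : y l = 0)
    {x₀ : ℝ} (hx₀ : x₀ ∈ Set.Icc 0 l) :
    ((∫ x in (0:ℝ)..l, Fv α y x) + 2 * α (y x₀) * δ) ∈ Adm α (l + δ) := by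
  obtain ⟨hx₀0, hx₀l⟩ := hx₀
  have hl : (0:ℝ) ≤ l := le_trans hx₀0 hx₀l
  rcases eq_or_lt_of_le hδ with rfl | hδ'
  · refine ⟨y, by simpa using hy, hy0, by simpa using hyl, by simp⟩
  · set p : ℝ → ℝ := fun x => if x ≤ x₀ then y x else y x₀ with hp
    set g : ℝ → ℝ := fun x => y (x - δ) with hgdef
    set Y : ℝ → ℝ := fun x => if x ≤ x₀ + δ then p x else g x with hY
    have hyp : LipschitzOnWith 1 p (Set.Icc 0 (x₀ + δ)) :=
      lipschitz_splice hx₀0 (by linarith)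
        (hy.mono (Set.Icc_subset_Icc le_rfl hx₀l)) (lipschitz_const_onWith _ _) rfl
    have hyg : LipschitzOnWith 1 g (Set.Icc (x₀ + δ) (l + δ)) :=
      lipschitz_shift (hy.mono (Set.Icc_subset_Icc hx₀0 le_rfl)) δ
    have hpg : p (x₀ + δ) = g (x₀ + δ) := by
      simp only [hp, hgdef, if_neg (not_le.2 (by linarith : x₀ < x₀ + δ))]
      rw [add_sub_cancel_right]
    have hYlip : LipschitzOnWith 1 Y (Set.Icc 0 (l + δ)) :=
      lipschitz_splice (by linarith) (by linarith) hyp hyg hpg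
    -- integrability of pieces
    have iy1 : IntervalIntegrable (Fv α y) volume 0 x₀ :=
      Fv_intervalIntegrable hαc hα0 hM hx₀0 (hy.mono (Set.Icc_subset_Icc le_rfl hx₀l))
    have iy2 : IntervalIntegrable (Fv α y) volume x₀ l :=
      Fv_intervalIntegrable hαc hα0 hM hx₀l (hy.mono (Set.Icc_subset_Icc hx₀0 le_rfl))
    have iconst : IntervalIntegrable (Fv α (fun _ => y x₀)) volume x₀ (x₀ + δ) := by
      have : Fv α (fun _ => y x₀) = fun _ => 2 * α (y x₀) := funext (Fv_const α (y x₀))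
      rw [this]; exact intervalIntegrable_const
    have hinner := Fv_splice_integral α hx₀0 (by linarith : x₀ ≤ x₀ + δ) iy1 iconst
    have ig : IntervalIntegrable (Fv α g) volume (x₀ + δ) (l + δ) :=
      Fv_intervalIntegrable hαc hα0 hM (by linarith) hyg
    have houter := Fv_splice_integral α (by linarith : (0:ℝ) ≤ x₀ + δ)
      (by linarith : x₀ + δ ≤ l + δ) hinner.1 ig
    refine ⟨Y, hYlip, ?_, ?_, ?_⟩
    · simp only [hY, hp, if_pos (by linarith : (0:ℝ) ≤ x₀ + δ), if_pos hx₀0, hy0]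
    · by_cases hc : l + δ ≤ x₀ + δ
      · have hxl : x₀ = l := le_antisymm hx₀l (by linarith)
        show (if l + δ ≤ x₀ + δ then p (l + δ) else g (l + δ)) = 0
        rw [if_pos hc]
        show (if l + δ ≤ x₀ then y (l + δ) else y x₀) = 0
        rw [if_neg (not_le.2 (by linarith : x₀ < l + δ)), hxl, hyl]
      · simp only [hY, hgdef, if_neg hc, add_sub_cancel_right, hyl]
    · have e1 : (∫ x in (0:ℝ)..(l + δ), Fv α Y x)
          = (∫ x in (0:ℝ)..(x₀ + δ), Fv α p x) + ∫ x in (x₀ + δ)..(l + δ), Fv α g x :=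
        houter.2
      have e2 : (∫ x in (0:ℝ)..(x₀ + δ), Fv α p x)
          = (∫ x in (0:ℝ)..x₀, Fv α y x) + ∫ x in x₀..(x₀ + δ), Fv α (fun _ => y x₀) x :=
        hinner.2
      have e3 : (∫ x in x₀..(x₀ + δ), Fv α (fun _ => y x₀) x) = 2 * α (y x₀) * δ := by
        rw [show Fv α (fun _ => y x₀) = fun _ => 2 * α (y x₀) from funext (Fv_const α (y x₀))]
        rw [intervalIntegral.integral_const, smul_eq_mul]
        ring
      have e4 : (∫ x in (x₀ + δ)..(l + δ), Fv α g x) = ∫ x in x₀..l, Fv α y x := by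
        rw [show Fv α g = fun x => Fv α y (x - δ) from funext (Fv_shift α y δ)]
        rw [intervalIntegral.integral_comp_sub_right (fun x => Fv α y x) δ,
          add_sub_cancel_right, add_sub_cancel_right]
      have e5 : (∫ x in (0:ℝ)..x₀, Fv α y x) + (∫ x in x₀..l, Fv α y x)
          = ∫ x in (0:ℝ)..l, Fv α y x :=
        intervalIntegral.integral_add_adjacent_intervals iy1 iy2
      rw [e1, e2, e3, e4]
      linarith [e5]
lemma lipschitz_shift' {y : ℝ → ℝ} {a b : ℝ} (hy : LipschitzOnWith 1 y (Set.Icc a b)) (δ : ℝ) :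
    LipschitzOnWith 1 (fun x => y (x + δ)) (Set.Icc (a - δ) (b - δ)) := by
  rw [lipschitzOnWith_iff_dist_le_mul] at hy ⊢
  intro x hx z hz
  rw [Set.mem_Icc] at hx hz
  have := hy (x + δ) (Set.mem_Icc.2 ⟨by linarith [hx.1], by linarith [hx.2]⟩)
    (z + δ) (Set.mem_Icc.2 ⟨by linarith [hz.1], by linarith [hz.2]⟩)
  simp only [Real.dist_eq, add_sub_add_right_eq_sub] at this ⊢
  exact this

lemma Fv_shift' (α y : ℝ → ℝ) (δ x : ℝ) : Fv α (fun t => y (t + δ)) x = Fv α y (x + δ) := by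
  unfold Fv
  rw [deriv_comp_add_const]

/-- Universal chord theorem: a continuous function with equal endpoints has a
horizontal chord of length `L / n`. -/
lemma chord_exists {y : ℝ → ℝ} {L : ℝ} (hL : 0 ≤ L) (hy : ContinuousOn y (Set.Icc 0 L))
    (h0L : y 0 = y L) {n : ℕ} (hn : 0 < n) :
    ∃ c, 0 ≤ c ∧ c + L / n ≤ L ∧ y c = y (c + L / n) := by
  set d : ℝ := L / n with hd
  have hd0 : 0 ≤ d := div_nonneg hL (by positivity)
  have hnd : (n : ℝ) * d = L := by
    rw [hd]; field_simp
  have hLd : L - d ≤ L := by linarith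
  have hmem : ∀ x ∈ Set.Icc (0:ℝ) (L - d), x + d ∈ Set.Icc (0:ℝ) L := by
    intro x hx
    rw [Set.mem_Icc] at hx ⊢
    constructor <;> linarith [hx.1, hx.2]
  have hmem' : Set.Icc (0:ℝ) (L - d) ⊆ Set.Icc 0 L := by
    apply Set.Icc_subset_Icc le_rfl; linarith
  set g : ℝ → ℝ := fun x => y (x + d) - y x with hg
  have hgc : ContinuousOn g (Set.Icc 0 (L - d)) := by
    apply ContinuousOn.sub
    · exact hy.comp (Continuous.continuousOn (by continuity)) hmem
    · exact hy.mono hmem'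
  have hstep : ∀ i : ℕ, (i:ℝ) * d + d = ((i+1 : ℕ):ℝ) * d := by
    intro i; push_cast; ring
  have hsum : ∑ i ∈ Finset.range n, g ((i:ℝ) * d) = 0 := by
    have : ∀ i : ℕ, g ((i:ℝ) * d) = y (((i+1:ℕ):ℝ) * d) - y ((i:ℝ) * d) := by
      intro i; rw [hg]; simp only []; rw [hstep i]
    simp only [this]
    rw [Finset.sum_range_sub (fun i : ℕ => y ((i:ℝ) * d))]
    simp only [Nat.cast_zero, zero_mul, hnd, h0L, sub_self]
  have hdom : ∀ i : ℕ, i < n → (i:ℝ) * d ∈ Set.Icc (0:ℝ) (L - d) := by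
    intro i hi
    constructor
    · positivity
    · have : (i:ℝ) ≤ (n:ℝ) - 1 := by
        have : (i:ℝ) + 1 ≤ n := by exact_mod_cast hi
        linarith
      nlinarith [hd0]
  have hex1 : ∃ i, i < n ∧ g ((i:ℝ) * d) ≤ 0 := by
    by_contra h
    push_neg at h
    have : 0 < ∑ i ∈ Finset.range n, g ((i:ℝ) * d) :=
      Finset.sum_pos (fun i hi => h i (Finset.mem_range.1 hi))
        (Finset.nonempty_range_iff.2 hn.ne')
    rw [hsum] at this; exact lt_irrefl 0 this
  have hex2 : ∃ j, j < n ∧ 0 ≤ g ((j:ℝ) * d) := by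
    by_contra h
    push_neg at h
    have : ∑ i ∈ Finset.range n, g ((i:ℝ) * d) < 0 :=
      Finset.sum_neg (fun i hi => h i (Finset.mem_range.1 hi))
        (Finset.nonempty_range_iff.2 hn.ne')
    rw [hsum] at this; exact lt_irrefl 0 this
  obtain ⟨i, hi, hgi⟩ := hex1
  obtain ⟨j, hj, hgj⟩ := hex2
  have hsub : Set.uIcc ((i:ℝ) * d) ((j:ℝ) * d) ⊆ Set.Icc 0 (L - d) :=
    Set.uIcc_subset_Icc (hdom i hi) (hdom j hj)
  have hivt := intermediate_value_uIcc (hgc.mono hsub)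
  have h0m : (0:ℝ) ∈ Set.uIcc (g ((i:ℝ) * d)) (g ((j:ℝ) * d)) := by
    rw [Set.mem_uIcc]
    left; exact ⟨hgi, hgj⟩
  obtain ⟨c, hc, hgc0⟩ := hivt h0m
  have hcm := hsub hc
  refine ⟨c, hcm.1, by linarith [hcm.2], ?_⟩
  have : y (c + d) - y c = 0 := hgc0
  linarith

/-- The deletion construction: excising a chord of length δ loses at most 2Aδ. -/
lemma deletion_step {α : ℝ → ℝ} (hαc : Continuous α) (hα0 : ∀ t, 0 ≤ α t)
    {M : ℝ} (hM : ∀ t, α t ≤ M) {L c δ : ℝ} (hc0 : 0 ≤ c) (hδ : 0 ≤ δ) (hcd : c + δ ≤ L)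
    {y : ℝ → ℝ} (hy : LipschitzOnWith 1 y (Set.Icc 0 L)) (hy0 : y 0 = 0) (hyL : y L = 0)
    (hchord : y c = y (c + δ)) {A : ℝ} (hA : ∀ x ∈ Set.Icc (0:ℝ) L, α (y x) ≤ A) :
    ∃ z : ℝ → ℝ, LipschitzOnWith 1 z (Set.Icc 0 (L - δ)) ∧ z 0 = 0 ∧ z (L - δ) = 0 ∧
      (∀ x ∈ Set.Icc (0:ℝ) (L - δ), ∃ x' ∈ Set.Icc (0:ℝ) L, z x = y x') ∧
      (∫ x in (0:ℝ)..L, Fv α y x) - 2 * A * δ ≤ ∫ x in (0:ℝ)..(L - δ), Fv α z x := by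
  have hcL : c ≤ L - δ := by linarith
  set g : ℝ → ℝ := fun x => y (x + δ) with hgdef
  set z : ℝ → ℝ := fun x => if x ≤ c then y x else g x with hz
  have hyg : LipschitzOnWith 1 g (Set.Icc c (L - δ)) := by
    have := lipschitz_shift' (hy.mono (Set.Icc_subset_Icc (by linarith) le_rfl
      : Set.Icc (c + δ) L ⊆ Set.Icc 0 L)) δ
    simpa [add_sub_cancel_right] using this
  have hgc : g c = y c := by rw [hgdef]; exact hchord.symm
  have hzlip : LipschitzOnWith 1 z (Set.Icc 0 (L - δ)) :=
    lipschitz_splice hc0 hcL (hy.mono (Set.Icc_subset_Icc le_rfl (by linarith))) hyg hgc.symm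
  have iy1 : IntervalIntegrable (Fv α y) volume 0 c :=
    Fv_intervalIntegrable hαc hα0 hM hc0 (hy.mono (Set.Icc_subset_Icc le_rfl (by linarith)))
  have iy2 : IntervalIntegrable (Fv α y) volume c (c + δ) :=
    Fv_intervalIntegrable hαc hα0 hM (by linarith)
      (hy.mono (Set.Icc_subset_Icc hc0 (by linarith)))
  have iy3 : IntervalIntegrable (Fv α y) volume (c + δ) L :=
    Fv_intervalIntegrable hαc hα0 hM (by linarith)
      (hy.mono (Set.Icc_subset_Icc (by linarith) le_rfl))
  have ig : IntervalIntegrable (Fv α g) volume c (L - δ) :=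
    Fv_intervalIntegrable hαc hα0 hM hcL hyg
  have hsplice := Fv_splice_integral α hc0 hcL iy1 ig
  have e4 : (∫ x in c..(L - δ), Fv α g x) = ∫ x in (c + δ)..L, Fv α y x := by
    rw [show Fv α g = fun x => Fv α y (x + δ) from funext (Fv_shift' α y δ)]
    rw [intervalIntegral.integral_comp_add_right (fun x => Fv α y x) δ, sub_add_cancel]
  have h12 := intervalIntegral.integral_add_adjacent_intervals iy1 iy2
  have h123 := intervalIntegral.integral_add_adjacent_intervals (iy1.trans iy2) iy3
  have hmid : (∫ x in c..(c+δ), Fv α y x) ≤ 2 * A * δ := by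
    have hA0 : 0 ≤ A := le_trans (hα0 (y c)) (hA c ⟨hc0, by linarith⟩)
    calc (∫ x in c..(c+δ), Fv α y x) ≤ ∫ _x in c..(c+δ), 2 * A :=
          intervalIntegral.integral_mono_on (by linarith) iy2 intervalIntegrable_const
            (fun x hx => le_trans (Fv_le hα0 y x)
              (by
                have := hA x ⟨le_trans hc0 hx.1, le_trans hx.2 (by linarith)⟩
                linarith))
    _ = 2 * A * δ := by rw [intervalIntegral.integral_const, smul_eq_mul]; ring
  refine ⟨z, hzlip, ?_, ?_, ?_, ?_⟩
  · simp only [hz, if_pos hc0, hy0]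
  · by_cases h : L - δ ≤ c
    · have hce : c = L - δ := le_antisymm hcL h
      have : z (L - δ) = y (L - δ) := by simp only [hz, if_pos h]
      rw [this, ← hce, hchord, show c + δ = L by linarith, hyL]
    · have : z (L - δ) = y (L - δ + δ) := by simp only [hz, hgdef, if_neg h]
      rw [this, sub_add_cancel, hyL]
  · intro x hx
    by_cases h : x ≤ c
    · exact ⟨x, ⟨hx.1, by linarith [hx.2]⟩, by simp only [hz, if_pos h]⟩
    · exact ⟨x + δ, ⟨by linarith [hx.1], by linarith [hx.2]⟩, by simp only [hz, hgdef, if_neg h]⟩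
  · rw [hsplice.2, e4]
    linarith
/-- Iterated deletion: a competitor of length `l` yields one of length `l·(b-j)/b`,
losing at most `2·A·l·j/b`. -/
lemma iterated_deletion {α : ℝ → ℝ} (hαc : Continuous α) (hα0 : ∀ t, 0 ≤ α t)
    {M : ℝ} (hM : ∀ t, α t ≤ M) {l : ℝ} (hl : 0 < l) {y : ℝ → ℝ}
    (hy : LipschitzOnWith 1 y (Set.Icc 0 l)) (hy0 : y 0 = 0) (hyl : y l = 0)
    {A : ℝ} (hA : ∀ x ∈ Set.Icc (0:ℝ) l, α (y x) ≤ A) {b : ℕ} (hb : 0 < b) :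
    ∀ j : ℕ, j < b → ∃ z : ℝ → ℝ,
      LipschitzOnWith 1 z (Set.Icc 0 (l * ((b:ℝ) - j) / b)) ∧ z 0 = 0 ∧
      z (l * ((b:ℝ) - j) / b) = 0 ∧
      (∀ x ∈ Set.Icc (0:ℝ) (l * ((b:ℝ) - j) / b), ∃ x' ∈ Set.Icc (0:ℝ) l, z x = y x') ∧
      (∫ x in (0:ℝ)..l, Fv α y x) - 2 * A * (l * j / b)
        ≤ ∫ x in (0:ℝ)..(l * ((b:ℝ) - j) / b), Fv α z x := by
  have hb' : ((b:ℝ)) ≠ 0 := Nat.cast_ne_zero.2 hb.ne'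
  intro j
  induction j with
  | zero =>
    intro _
    have hE : l * ((b:ℝ) - ((0:ℕ):ℝ)) / b = l := by push_cast; field_simp; simp
    rw [hE]
    refine ⟨y, hy, hy0, hyl, fun x hx => ⟨x, hx, rfl⟩, by simp⟩
  | succ j ih =>
    intro hj
    have hjb : j < b := Nat.lt_of_succ_lt hj
    obtain ⟨z, hzlip, hz0, hzL, hrange, hval⟩ := ih hjb
    set L : ℝ := l * ((b:ℝ) - j) / b with hLdef
    have hbj : (0:ℝ) < (b:ℝ) - j := by
      have : (j:ℝ) < b := by exact_mod_cast hjb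
      linarith
    have hbpos : (0:ℝ) < (b:ℝ) := by positivity
    have hL0 : 0 < L := by
      apply div_pos (mul_pos hl hbj) hbpos
    have hn : 0 < b - j := Nat.sub_pos_of_lt hjb
    have hcast : (((b - j : ℕ)):ℝ) = (b:ℝ) - j := by
      rw [Nat.cast_sub hjb.le]
    have hd : L / (((b - j : ℕ)):ℝ) = l / b := by
      rw [hcast, hLdef]
      field_simp
    obtain ⟨c, hc0, hcd, hchord⟩ := chord_exists hL0.le hzlip.continuousOn
      (hz0.trans hzL.symm) hn
    rw [hd] at hcd hchord
    have hδ : 0 ≤ l / b := by positivity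
    have hAz : ∀ x ∈ Set.Icc (0:ℝ) L, α (z x) ≤ A := by
      intro x hx
      obtain ⟨x', hx', he⟩ := hrange x hx
      rw [he]; exact hA x' hx'
    obtain ⟨z', hz'lip, hz'0, hz'L, hrange', hval'⟩ :=
      deletion_step hαc hα0 hM hc0 hδ hcd hzlip hz0 hzL hchord hAz
    have hE2 : L - l / b = l * ((b:ℝ) - ((j+1:ℕ):ℝ)) / b := by
      rw [hLdef]; push_cast; field_simp; ring
    rw [hE2] at hz'lip hz'L hrange' hval'
    refine ⟨z', hz'lip, hz'0, hz'L, ?_, ?_⟩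
    · intro x hx
      obtain ⟨x', hx', he⟩ := hrange' x hx
      obtain ⟨x'', hx'', he'⟩ := hrange x' hx'
      exact ⟨x'', hx'', he.trans he'⟩
    · have ecast : l * ((j+1:ℕ):ℝ) / b = l * j / b + l / b := by push_cast; ring
      rw [ecast]
      linarith
lemma Adm_nonempty (α : ℝ → ℝ) (l : ℝ) : (Adm α l).Nonempty :=
  ⟨_, ⟨fun _ => (0:ℝ), lipschitz_const_onWith 0 _, rfl, rfl, rfl⟩⟩

lemma Adm_bddAbove {α : ℝ → ℝ} (hαc : Continuous α) (hα0 : ∀ t, 0 ≤ α t)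
    {M : ℝ} (hM : ∀ t, α t ≤ M) {l : ℝ} (hl : 0 ≤ l) : BddAbove (Adm α l) := by
  refine ⟨2 * M * l, ?_⟩
  rintro r ⟨y, hy, hy0, hyl, rfl⟩
  have hint := Fv_intervalIntegrable hαc hα0 hM hl hy
  calc (∫ x in (0:ℝ)..l, Fv α y x) ≤ ∫ _x in (0:ℝ)..l, 2 * M :=
        intervalIntegral.integral_mono_on hl hint intervalIntegrable_const
          (fun x _ => le_trans (Fv_le hα0 y x) (by linarith [hM (y x)]))
  _ = 2 * M * l := by rw [intervalIntegral.integral_const, smul_eq_mul]; ring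

/-- From a competitor at length `l` we get a lower bound for the supremum at any
smaller length `a`, losing at most `2A(l-a)`. -/
lemma deletion_sup {α : ℝ → ℝ} (hαc : Continuous α) (hα0 : ∀ t, 0 ≤ α t)
    {M : ℝ} (hM : ∀ t, α t ≤ M) {a l : ℝ} (ha : 0 < a) (hal : a ≤ l) {y : ℝ → ℝ}
    (hy : LipschitzOnWith 1 y (Set.Icc 0 l)) (hy0 : y 0 = 0) (hyl : y l = 0)
    {A : ℝ} (hA : ∀ x ∈ Set.Icc (0:ℝ) l, α (y x) ≤ A) :
    (∫ x in (0:ℝ)..l, Fv α y x) - 2 * A * (l - a) ≤ sSup (Adm α a) := by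
  have hl : 0 < l := lt_of_lt_of_le ha hal
  have hA0 : 0 ≤ A := le_trans (hα0 (y 0)) (hA 0 ⟨le_rfl, hl.le⟩)
  set r : ℝ := ∫ x in (0:ℝ)..l, Fv α y x with hr
  apply le_of_forall_pos_le_add
  intro ε hε
  set η : ℝ := ε / (2 * A + 1) with hη
  have hη0 : 0 < η := by positivity
  have h2Aη : 2 * A * η ≤ ε := by
    rw [hη, mul_div_assoc']
    rw [div_le_iff₀ (by linarith : (0:ℝ) < 2 * A + 1)]
    nlinarith
  set m : ℝ := max (a - η) (a / 2) with hm
  have hm0 : 0 < m := lt_of_lt_of_le (by linarith : (0:ℝ) < a / 2) (le_max_right _ _)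
  have hma : m < a := max_lt (by linarith) (by linarith)
  have hmη : a - η ≤ m := le_max_left _ _
  have hdiv : m / l < a / l := by
    rw [div_lt_div_iff₀ hl hl]
    nlinarith
  obtain ⟨q, hq1, hq2⟩ := exists_rat_btwn hdiv
  have hq0 : (0:ℝ) < (q:ℝ) := lt_trans (by positivity) hq1
  have hq0' : (0:ℚ) < q := by exact_mod_cast hq0
  have hql : l * (q:ℝ) < a := by
    have := (lt_div_iff₀ hl).1 hq2
    linarith [this]
  have hqm : m < l * (q:ℝ) := by
    have := (div_lt_iff₀ hl).1 hq1
    linarith [this]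
  have hq1' : (q:ℚ) < 1 := by
    have h1 : (q:ℝ) < 1 := lt_of_lt_of_le hq2 ((div_le_one hl).2 hal)
    exact_mod_cast h1
  set k : ℕ := q.num.toNat with hk
  set b : ℕ := q.den with hbdef
  have hbpos : 0 < b := q.pos
  have hnum : (q.num : ℤ) = (k : ℤ) := (Int.toNat_of_nonneg (Rat.num_nonneg.2 hq0'.le)).symm
  have hk1 : 0 < k := by
    have := Rat.num_pos.2 hq0'
    omega
  have hkb : k ≤ b := by
    have := Rat.lt_one_iff_num_lt_denom.2 hq1'
    omega
  have hcastq : (q:ℝ) = (k:ℝ) / (b:ℝ) := by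
    rw [Rat.cast_def]
    congr 1
    exact_mod_cast congrArg (Int.cast : ℤ → ℝ) hnum
  set j : ℕ := b - k with hjdef
  have hj : j < b := by omega
  have hjcast : (j:ℝ) = (b:ℝ) - (k:ℝ) := by
    rw [hjdef, Nat.cast_sub hkb]
  have hbR : ((b:ℝ)) ≠ 0 := Nat.cast_ne_zero.2 hbpos.ne'
  obtain ⟨z, hzlip, hz0, hzL, hrange, hval⟩ :=
    iterated_deletion hαc hα0 hM hl hy hy0 hyl hA hbpos j hj
  set s : ℝ := l * (q:ℝ) with hs
  have hseq : l * ((b:ℝ) - (j:ℝ)) / (b:ℝ) = s := by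
    rw [hjcast, hs, hcastq]
    field_simp
    ring
  have hjval : l * (j:ℝ) / (b:ℝ) = l - s := by
    rw [hjcast, hs, hcastq]
    field_simp
  rw [hseq] at hzlip hzL hrange hval
  rw [hjval] at hval
  have hs0 : 0 < s := by positivity
  have hδ : 0 ≤ a - s := by linarith
  have hmem := insertion hαc hα0 hM hδ hzlip hz0 hzL
    (Set.mem_Icc.2 ⟨le_rfl, hs0.le⟩ : (0:ℝ) ∈ Set.Icc 0 s)
  rw [show s + (a - s) = a by ring] at hmem
  have hsup := le_csSup (Adm_bddAbove hαc hα0 hM ha.le) hmem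
  have hgain : 0 ≤ 2 * α (z 0) * (a - s) := by
    apply mul_nonneg (by linarith [hα0 (z 0)]) hδ
  have hsm : a - s < η := by linarith
  nlinarith [hval, hsup, hgain, h2Aη, mul_le_mul_of_nonneg_left hsm.le (by linarith : (0:ℝ) ≤ 2 * A)]
lemma main_aux {α : ℝ → ℝ} (hαc : Continuous α) (hα0 : ∀ t, 0 ≤ α t)
    {M : ℝ} (hM : ∀ t, α t ≤ M) {a b θ μ : ℝ} (ha : 0 < a) (hb : 0 < b) (hab : a ≤ b)
    (hθ : 0 ≤ θ) (hμ : 0 ≤ μ) (hθμ : θ + μ = 1) :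
    sSup (Adm α (θ * a + μ * b)) ≤ θ * sSup (Adm α a) + μ * sSup (Adm α b) := by
  set l : ℝ := θ * a + μ * b with hldef
  have hal : a ≤ l := by nlinarith [mul_nonneg hμ (sub_nonneg.2 hab)]
  have hlb : l ≤ b := by nlinarith [mul_nonneg hθ (sub_nonneg.2 hab)]
  have hl : 0 < l := lt_of_lt_of_le ha hal
  apply le_of_forall_pos_le_add
  intro ε hε
  obtain ⟨r, hrmem, hrlt⟩ := exists_lt_of_lt_csSup (Adm_nonempty α l)
    (show sSup (Adm α l) - ε < sSup (Adm α l) by linarith)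
  obtain ⟨y, hy, hy0, hyl, hr⟩ := hrmem
  have hαyc : ContinuousOn (fun x => α (y x)) (Set.Icc 0 l) :=
    hαc.comp_continuousOn hy.continuousOn
  obtain ⟨x₀, hx₀, hmax⟩ := isCompact_Icc.exists_isMaxOn (Set.nonempty_Icc.2 hl.le) hαyc
  set A : ℝ := α (y x₀) with hAdef
  have hA : ∀ x ∈ Set.Icc (0:ℝ) l, α (y x) ≤ A := fun x hx => hmax hx
  have hmemb := insertion hαc hα0 hM (show (0:ℝ) ≤ b - l by linarith) hy hy0 hyl hx₀
  rw [show l + (b - l) = b by ring] at hmemb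
  have hGb : r + 2 * A * (b - l) ≤ sSup (Adm α b) := by
    rw [hr]
    exact le_csSup (Adm_bddAbove hαc hα0 hM hb.le) hmemb
  have hGa : r - 2 * A * (l - a) ≤ sSup (Adm α a) := by
    rw [hr]
    exact deletion_sup hαc hα0 hM ha hal hy hy0 hyl hA
  have h1 := mul_le_mul_of_nonneg_left hGa hθ
  have h2 := mul_le_mul_of_nonneg_left hGb hμ
  have h3 : θ * a + μ * b = l := hldef.symm
  have key : θ * (r - 2 * A * (l - a)) + μ * (r + 2 * A * (b - l)) = r := by
    linear_combination (r - 2 * A * l) * hθμ + 2 * A * h3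
  linarith

/-- For α : ℝ → ℝ continuous, bounded, nonnegative, the function
l ↦ 𝒢*[l] = sup over 1-Lipschitz y : [0,l] → ℝ with y(0) = y(l) = 0 of
∫₀^l α(y(x))·(1 + √(1-y'(x)²)) dx is convex on (0,∞). -/
theorem Gstar_convex (α : ℝ → ℝ) (hαc : Continuous α) (hαb : ∃ M, ∀ y, α y ≤ M)
    (hα0 : ∀ y, 0 ≤ α y) :
    ConvexOn ℝ (Set.Ioi (0 : ℝ)) (fun l : ℝ =>
      sSup {r : ℝ | ∃ y : ℝ → ℝ, LipschitzOnWith 1 y (Set.Icc 0 l) ∧ y 0 = 0 ∧ y l = 0 ∧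
        r = ∫ x in (0 : ℝ)..l, α (y x) * (1 + Real.sqrt (1 - (deriv y x) ^ 2))}) := by
  obtain ⟨M, hM⟩ := hαb
  refine ⟨convex_Ioi 0, ?_⟩
  intro x hx y hy θ μ hθ hμ hθμ
  show sSup (Adm α (θ * x + μ * y)) ≤ θ * sSup (Adm α x) + μ * sSup (Adm α y)
  rcases le_total x y with h | h
  · exact main_aux hαc hα0 hM (Set.mem_Ioi.1 hx) (Set.mem_Ioi.1 hy) h hθ hμ hθμ
  · have := main_aux hαc hα0 hM (Set.mem_Ioi.1 hy) (Set.mem_Ioi.1 hx) h hμ hθ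
      (by linarith)
    rw [show θ * x + μ * y = μ * y + θ * x from by ring]
    linarith
end

section
/- Let α : ℝ → ℝ be continuous, bounded, nonnegative, and for l > 0 let 𝒢*[l] be as above. Then for every l₀ > 0 and every l ≥ l₀: 𝒢*[l] ≥ 𝒢*[l₀] + 2·ᾱ·(l - l₀), where ᾱ = sup_{x ∈ [0,l₀]} α(ȳ(x)) for any maximizer ȳ of the variational problem at length l₀. -/
open MeasureTheory intervalIntegral Set

private lemma sqrt_aux' (w : ℝ) : Real.sqrt (1 - w ^ 2) ≤ 1 :=
  Real.sqrt_le_one.mpr (by nlinarith [sq_nonneg w])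

private lemma meas_aux' (g : ℝ → ℝ) :
    Measurable (fun x => 1 + Real.sqrt (1 - (deriv g x) ^ 2)) :=
  measurable_const.add (((measurable_const.sub ((measurable_deriv g).pow_const 2))).sqrt)

private lemma int_aux' (α : ℝ → ℝ) (M : ℝ) (hM : ∀ y, α y ≤ M) (hα0 : ∀ y, 0 ≤ α y)
    (g : ℝ → ℝ) (a b : ℝ) (hab : a ≤ b)
    (hg : AEStronglyMeasurable (fun x => α (g x)) (volume.restrict (Set.Ioc a b))) :
    IntervalIntegrable (fun x => α (g x) * (1 + Real.sqrt (1 - (deriv g x) ^ 2))) volume a b := by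
  rw [intervalIntegrable_iff_integrableOn_Ioc_of_le hab]
  refine ⟨hg.mul (meas_aux' g).aestronglyMeasurable.restrict, ?_⟩
  apply MeasureTheory.HasFiniteIntegral.of_bounded (C := M * 2)
  filter_upwards with x
  have h1 := sqrt_aux' (deriv g x)
  have h2 := Real.sqrt_nonneg (1 - (deriv g x) ^ 2)
  rw [Real.norm_eq_abs, abs_of_nonneg (mul_nonneg (hα0 _) (by positivity))]
  have := hα0 (g x); have := hM (g x)
  nlinarith

private lemma congr_aux' (a b : ℝ) (f g : ℝ → ℝ) (hab : a ≤ b)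
    (h : ∀ x ∈ Set.Ioo a b, f x = g x) :
    (∫ x in a..b, f x) = ∫ x in a..b, g x := by
  apply intervalIntegral.integral_congr_ae
  have hb : ∀ᵐ x : ℝ ∂(volume : Measure ℝ), x ≠ b := by
    rw [ae_iff]; simpa using measure_singleton b
  filter_upwards [hb] with x hx hmem
  rw [Set.uIoc_of_le hab] at hmem
  exact h x ⟨hmem.1, lt_of_le_of_ne hmem.2 hx⟩

/-- Supporting-line inequality: for l ≥ l₀ > 0 and any maximizer ȳ of the variational
problem at length l₀, 𝒢*[l] ≥ 𝒢*[l₀] + 2·ᾱ·(l - l₀), where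
ᾱ = sup_{x ∈ [0,l₀]} α(ȳ(x)). -/
theorem Gstar_supporting_line (α : ℝ → ℝ) (hαc : Continuous α) (hαb : ∃ M, ∀ y, α y ≤ M)
    (hα0 : ∀ y, 0 ≤ α y) (l₀ : ℝ) (hl₀ : 0 < l₀) (ybar : ℝ → ℝ)
    (hybar : LipschitzOnWith 1 ybar (Set.Icc 0 l₀)) (hybar0 : ybar 0 = 0) (hybarl : ybar l₀ = 0)
    (hmax : ∀ y : ℝ → ℝ, LipschitzOnWith 1 y (Set.Icc 0 l₀) → y 0 = 0 → y l₀ = 0 →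
      (∫ x in (0 : ℝ)..l₀, α (y x) * (1 + Real.sqrt (1 - (deriv y x) ^ 2)))
        ≤ ∫ x in (0 : ℝ)..l₀, α (ybar x) * (1 + Real.sqrt (1 - (deriv ybar x) ^ 2)))
    (l : ℝ) (hl : l₀ ≤ l) :
    sSup {r : ℝ | ∃ y : ℝ → ℝ, LipschitzOnWith 1 y (Set.Icc 0 l) ∧ y 0 = 0 ∧ y l = 0 ∧
        r = ∫ x in (0 : ℝ)..l, α (y x) * (1 + Real.sqrt (1 - (deriv y x) ^ 2))}
      ≥ (∫ x in (0 : ℝ)..l₀, α (ybar x) * (1 + Real.sqrt (1 - (deriv ybar x) ^ 2)))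
        + 2 * sSup ((fun x => α (ybar x)) '' Set.Icc (0 : ℝ) l₀) * (l - l₀) := by
  obtain ⟨M, hM⟩ := hαb
  have hl0 : (0 : ℝ) ≤ l₀ := hl₀.le
  have hll : (0 : ℝ) ≤ l := hl0.trans hl
  -- maximizer of α ∘ ybar on [0, l₀]
  obtain ⟨x₀, hx₀s, hx₀max⟩ := isCompact_Icc.exists_isMaxOn (⟨0, left_mem_Icc.mpr hl0⟩ :
      (Set.Icc (0:ℝ) l₀).Nonempty) (hαc.comp_continuousOn hybar.continuousOn)
  have hx₀0 : 0 ≤ x₀ := hx₀s.1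
  have hx₀l : x₀ ≤ l₀ := hx₀s.2
  have hsup : sSup ((fun x => α (ybar x)) '' Set.Icc (0 : ℝ) l₀) = α (ybar x₀) := by
    apply le_antisymm
    · apply csSup_le (Set.Nonempty.image _ ⟨0, left_mem_Icc.mpr hl0⟩)
      rintro r ⟨x, hx, rfl⟩
      exact hx₀max hx
    · exact le_csSup ⟨α (ybar x₀), by rintro r ⟨x, hx, rfl⟩; exact hx₀max hx⟩
        (Set.mem_image_of_mem _ hx₀s)
  set d : ℝ := l - l₀ with hdd
  have hd0 : 0 ≤ d := sub_nonneg.mpr hl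
  set x₁ : ℝ := x₀ + d with hx₁d
  have hx₁l : x₁ ≤ l := by simp only [hx₁d, hdd]; linarith
  -- the reparametrization φ and the competitor yt
  set φ : ℝ → ℝ := fun x => min l₀ (max 0 (max (min x x₀) (x - d))) with hφdef
  have hsub : LipschitzWith 1 (fun x : ℝ => x - d) := by
    have := (isometry_add_right (-d) : Isometry (fun x : ℝ => x + -d)).lipschitz
    simpa [sub_eq_add_neg] using this
  have hconst : ∀ c : ℝ, LipschitzWith 1 (fun _ : ℝ => c) :=
    fun c => (LipschitzWith.const c).weaken (by norm_num)
  have hφlip : LipschitzWith 1 φ := by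
    have h1 : LipschitzWith 1 (fun x : ℝ => min x x₀) := by
      simpa using LipschitzWith.min (LipschitzWith.id : LipschitzWith 1 (id : ℝ → ℝ)) (hconst x₀)
    have h2 : LipschitzWith 1 (fun x : ℝ => max (min x x₀) (x - d)) := by
      simpa using LipschitzWith.max h1 hsub
    have h3 : LipschitzWith 1 (fun x : ℝ => max 0 (max (min x x₀) (x - d))) := by
      simpa using LipschitzWith.max (hconst 0) h2
    simpa [hφdef] using LipschitzWith.min (hconst l₀) h3
  have hφmem : ∀ x, φ x ∈ Set.Icc (0 : ℝ) l₀ := fun x =>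
    ⟨le_min hl0 (le_max_left _ _), min_le_left _ _⟩
  set yt : ℝ → ℝ := fun x => ybar (φ x) with hytdef
  have hytlip : LipschitzOnWith 1 yt (Set.Icc 0 l) := by
    have := hybar.comp (hφlip.lipschitzOnWith :
        LipschitzOnWith 1 φ (Set.Icc 0 l)) (fun x _ => hφmem x)
    simpa [Function.comp_def, hytdef] using this
  have hφ0 : φ 0 = 0 := by
    simp only [hφdef]
    rw [min_eq_left hx₀0, zero_sub, max_eq_left (neg_nonpos.mpr hd0), max_self,
      min_eq_right hl0]
  have hφl : φ l = l₀ := by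
    have hld : l - d = l₀ := by simp [hdd]
    simp only [hφdef]
    rw [min_eq_right (hx₀l.trans hl), hld, max_eq_right hx₀l, max_eq_right hl0, min_self]
  have hyt0 : yt 0 = 0 := by rw [hytdef]; simp only [hφ0, hybar0]
  have hytl : yt l = 0 := by rw [hytdef]; simp only [hφl, hybarl]
  -- piecewise description of φ
  have hφ1 : ∀ x ∈ Set.Ioo (0 : ℝ) x₀, φ x = x := by
    rintro x ⟨h1, h2⟩
    simp only [hφdef]
    rw [min_eq_left h2.le, max_eq_left (show x - d ≤ x by linarith),
      max_eq_right h1.le, min_eq_right (h2.le.trans hx₀l)]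
  have hφ2 : ∀ x ∈ Set.Ioo x₀ x₁, φ x = x₀ := by
    rintro x ⟨h1, h2⟩
    have h2' : x - d ≤ x₀ := by simp only [hx₁d] at h2; linarith
    simp only [hφdef]
    rw [min_eq_right h1.le, max_eq_left h2', max_eq_right hx₀0, min_eq_right hx₀l]
  have hφ3 : ∀ x ∈ Set.Ioo x₁ l, φ x = x - d := by
    rintro x ⟨h1, h2⟩
    have h1' : x₀ ≤ x - d := by simp only [hx₁d] at h1; linarith
    have h1'' : x₀ ≤ x := by linarith
    have h2' : x - d ≤ l₀ := by simp only [hdd]; linarith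
    simp only [hφdef]
    rw [min_eq_right h1'', max_eq_right h1', max_eq_right (hx₀0.trans h1'), min_eq_right h2']
  -- the integrands
  set F : ℝ → ℝ := fun x => α (yt x) * (1 + Real.sqrt (1 - (deriv yt x) ^ 2)) with hFdef
  set F₀ : ℝ → ℝ := fun x => α (ybar x) * (1 + Real.sqrt (1 - (deriv ybar x) ^ 2)) with hF₀def
  have hytcont : Continuous yt := by
    have := hybar.continuousOn.comp_continuous hφlip.continuous hφmem
    simpa [Function.comp_def, hytdef] using this
  have iF : ∀ a b : ℝ, a ≤ b → IntervalIntegrable F volume a b := fun a b hab =>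
    int_aux' α M hM hα0 yt a b hab (hαc.comp hytcont).aestronglyMeasurable.restrict
  have iF₀ : ∀ a b : ℝ, a ≤ b → 0 ≤ a → b ≤ l₀ → IntervalIntegrable F₀ volume a b := by
    intro a b hab ha hb
    refine int_aux' α M hM hα0 ybar a b hab ?_
    refine ContinuousOn.aestronglyMeasurable ?_ measurableSet_Ioc
    exact (hαc.comp_continuousOn hybar.continuousOn).mono
      (fun x hx => ⟨ha.trans hx.1.le, hx.2.trans hb⟩)
  -- pointwise identities on the three open pieces
  have hF1 : ∀ x ∈ Set.Ioo (0 : ℝ) x₀, F x = F₀ x := by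
    intro x hx
    have hev : yt =ᶠ[nhds x] ybar :=
      Filter.eventuallyEq_of_mem (isOpen_Ioo.mem_nhds hx)
        (fun y hy => by simp only [hytdef]; rw [hφ1 y hy])
    simp only [hFdef, hF₀def, hev.deriv_eq, hev.eq_of_nhds]
  have hF2 : ∀ x ∈ Set.Ioo x₀ x₁, F x = α (ybar x₀) * 2 := by
    intro x hx
    have hev : yt =ᶠ[nhds x] (fun _ => ybar x₀) :=
      Filter.eventuallyEq_of_mem (isOpen_Ioo.mem_nhds hx)
        (fun y hy => by simp only [hytdef]; rw [hφ2 y hy])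
    have hd : deriv yt x = 0 := by rw [hev.deriv_eq]; simp
    have hv : yt x = ybar x₀ := hev.eq_of_nhds
    simp only [hFdef, hd, hv]
    norm_num
  have hF3 : ∀ x ∈ Set.Ioo x₁ l, F x = F₀ (x - d) := by
    intro x hx
    have hev : yt =ᶠ[nhds x] (fun z => ybar (z - d)) :=
      Filter.eventuallyEq_of_mem (isOpen_Ioo.mem_nhds hx)
        (fun y hy => by simp only [hytdef]; rw [hφ3 y hy])
    have hd : deriv yt x = deriv ybar (x - d) := by
      rw [hev.deriv_eq]
      simpa using deriv_comp_sub_const ybar d x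
    have hv : yt x = ybar (x - d) := hev.eq_of_nhds
    simp only [hFdef, hF₀def, hd, hv]
  -- compute the integral of F over [0, l]
  have hx₀x₁ : x₀ ≤ x₁ := by simp only [hx₁d]; linarith
  have e1 : (∫ x in (0:ℝ)..x₀, F x) = ∫ x in (0:ℝ)..x₀, F₀ x := congr_aux' _ _ _ _ hx₀0 hF1
  have e2 : (∫ x in x₀..x₁, F x) = α (ybar x₀) * 2 * d := by
    rw [congr_aux' _ _ _ _ hx₀x₁ hF2, intervalIntegral.integral_const]
    simp only [hx₁d, smul_eq_mul]
    ring
  have e3 : (∫ x in x₁..l, F x) = ∫ x in x₀..l₀, F₀ x := by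
    rw [congr_aux' _ _ _ _ hx₁l hF3, intervalIntegral.integral_comp_sub_right F₀ d]
    congr 1 <;> simp [hx₁d, hdd] <;> ring
  have s1 : (∫ x in (0:ℝ)..x₀, F x) + (∫ x in x₀..x₁, F x) = ∫ x in (0:ℝ)..x₁, F x :=
    intervalIntegral.integral_add_adjacent_intervals (iF _ _ hx₀0) (iF _ _ hx₀x₁)
  have s2 : (∫ x in (0:ℝ)..x₁, F x) + (∫ x in x₁..l, F x) = ∫ x in (0:ℝ)..l, F x :=
    intervalIntegral.integral_add_adjacent_intervals (iF _ _ (hx₀0.trans hx₀x₁)) (iF _ _ hx₁l)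
  have s3 : (∫ x in (0:ℝ)..x₀, F₀ x) + (∫ x in x₀..l₀, F₀ x) = ∫ x in (0:ℝ)..l₀, F₀ x :=
    intervalIntegral.integral_add_adjacent_intervals (iF₀ _ _ hx₀0 le_rfl hx₀l)
      (iF₀ _ _ hx₀l hx₀0 le_rfl)
  have etotal : (∫ x in (0:ℝ)..l, F x)
      = (∫ x in (0:ℝ)..l₀, F₀ x) + 2 * α (ybar x₀) * (l - l₀) := by
    rw [← s2, ← s1, e1, e2, e3, ← hdd]
    linarith [s3]
  -- the set is bounded above
  have hbdd : BddAbove {r : ℝ | ∃ y : ℝ → ℝ, LipschitzOnWith 1 y (Set.Icc 0 l) ∧ y 0 = 0 ∧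
      y l = 0 ∧ r = ∫ x in (0 : ℝ)..l, α (y x) * (1 + Real.sqrt (1 - (deriv y x) ^ 2))} := by
    refine ⟨M * 2 * |l - 0|, ?_⟩
    rintro r ⟨y, hy, h0, hl', rfl⟩
    refine le_trans (le_abs_self _) ?_
    rw [← Real.norm_eq_abs]
    apply intervalIntegral.norm_integral_le_of_norm_le_const
    intro x _
    have h1 := sqrt_aux' (deriv y x)
    have h2 := Real.sqrt_nonneg (1 - (deriv y x) ^ 2)
    rw [Real.norm_eq_abs, abs_of_nonneg (mul_nonneg (hα0 _) (by positivity))]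
    have := hα0 (y x); have := hM (y x)
    nlinarith
  have hmem : (∫ x in (0:ℝ)..l, F x) ∈ {r : ℝ | ∃ y : ℝ → ℝ,
      LipschitzOnWith 1 y (Set.Icc 0 l) ∧ y 0 = 0 ∧ y l = 0 ∧
      r = ∫ x in (0 : ℝ)..l, α (y x) * (1 + Real.sqrt (1 - (deriv y x) ^ 2))} :=
    ⟨yt, hytlip, hyt0, hytl, rfl⟩
  have hle := le_csSup hbdd hmem
  rw [ge_iff_le, hsup]
  calc (∫ x in (0:ℝ)..l₀, F₀ x) + 2 * α (ybar x₀) * (l - l₀)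
      = ∫ x in (0:ℝ)..l, F x := etotal.symm
    _ ≤ _ := hle
end
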